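/- Let S be a nonnegative random variable on a probability space, and let p, N₀, s > 0 and K ∈ ℝ be such that for every t with 0 < t < p/N₀, P(S ≤ t) ≤ exp( K − s (p/t − N₀) ). Then for every θ > 0, 𝔼[ exp( −θ log₂(1 + S) ) ] ≤ (1 + p/N₀)^{−θ/ln 2} + exp(K + s N₀) · ∫_{(1 + p/N₀)^{−θ/ln 2}}^{1} exp( −s p t^{(ln 2)/θ} ) dt. -/

import Mathlib

open MeasureTheory

noncomputable section

theorem stmt14 {Ω : Type*} [MeasurableSpace Ω] (P : Measure Ω) [IsProbabilityMeasure P]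
    (S : Ω → ℝ) (hSmeas : Measurable S) (hS0 : ∀ ω, 0 ≤ S ω)
    (p N₀ s K : ℝ) (hp : 0 < p) (hN₀ : 0 < N₀) (hs : 0 < s)
    (htail : ∀ t : ℝ, 0 < t → t < p / N₀ →
      (P {ω | S ω ≤ t}).toReal ≤ Real.exp (K - s * (p / t - N₀)))
    (θ : ℝ) (hθ : 0 < θ) :
    ∫ ω, Real.exp (-θ * Real.logb 2 (1 + S ω)) ∂P
      ≤ (1 + p / N₀) ^ (-(θ / Real.log 2))
        + Real.exp (K + s * N₀) *
            ∫ t in ((1 + p / N₀) ^ (-(θ / Real.log 2)))..1,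
              Real.exp (-(s * p * t ^ (Real.log 2 / θ))) := by
  have hlog2 : 0 < Real.log 2 := Real.log_pos one_lt_two
  set b : ℝ := 1 + p / N₀ with hbdef
  have hb1 : 1 < b := by
    have : 0 < p / N₀ := div_pos hp hN₀
    rw [hbdef]; linarith
  have hb0 : 0 < b := lt_trans one_pos hb1
  set c : ℝ := Real.log 2 / θ with hcdef
  have hc0 : 0 < c := div_pos hlog2 hθ
  set a : ℝ := b ^ (-(θ / Real.log 2)) with hadef
  have ha0 : 0 < a := Real.rpow_pos_of_pos hb0 _
  have ha1 : a < 1 := Real.rpow_lt_one_of_one_lt_of_neg hb1 (by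
    have : 0 < θ / Real.log 2 := div_pos hθ hlog2
    linarith)
  set X : Ω → ℝ := fun ω => Real.exp (-θ * Real.logb 2 (1 + S ω)) with hXdef
  have hXmeas : Measurable X := by
    apply Measurable.exp
    apply Measurable.const_mul
    unfold Real.logb
    exact ((Real.measurable_log.comp (measurable_const.add hSmeas)).div_const _)
  have hX0 : ∀ ω, 0 < X ω := fun ω => Real.exp_pos _
  have hX1 : ∀ ω, X ω ≤ 1 := by
    intro ω
    rw [hXdef]
    have h1 : 0 ≤ Real.logb 2 (1 + S ω) :=
      Real.logb_nonneg one_lt_two (by linarith [hS0 ω])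
    calc Real.exp (-θ * Real.logb 2 (1 + S ω)) ≤ Real.exp 0 := by
          apply Real.exp_le_exp.2; nlinarith
      _ = 1 := Real.exp_zero
  -- description of the superlevel sets of X
  have hset : ∀ t : ℝ, 0 < t → {ω | t ≤ X ω} = {ω | S ω ≤ t ^ (-c) - 1} := by
    intro t ht0
    ext ω
    simp only [Set.mem_setOf_eq, hXdef]
    have h1S : (0:ℝ) < 1 + S ω := by linarith [hS0 ω]
    rw [Real.rpow_def_of_pos ht0, ← Real.log_le_iff_le_exp ht0, Real.logb]
    have hexp : S ω ≤ Real.exp (Real.log t * -c) - 1 ↔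
        Real.log (1 + S ω) ≤ Real.log t * -c := by
      constructor
      · intro h; rw [Real.log_le_iff_le_exp h1S]; linarith
      · intro h; have := (Real.log_le_iff_le_exp h1S).1 h; linarith
    rw [hexp]
    have e1 : -θ * (Real.log (1 + S ω) / Real.log 2)
        = (-θ * Real.log (1 + S ω)) / Real.log 2 := by ring
    have e2 : Real.log t * -c = (Real.log t * -Real.log 2) / θ := by
      rw [hcdef]; ring
    rw [e1, e2, le_div_iff₀ hlog2, le_div_iff₀ hθ]
    constructor <;> intro h <;> nlinarith [h]
  -- tail bound on (a, 1)
  have htail2 : ∀ t ∈ Set.Ioo a 1, (P {ω | t ≤ X ω}).toReal ≤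
      Real.exp (K + s * N₀) * Real.exp (-(s * p * t ^ c)) := by
    intro t ht
    have ht0 : 0 < t := lt_trans ha0 ht.1
    have hv0 : 0 < t ^ c := Real.rpow_pos_of_pos ht0 _
    have hv1 : t ^ c < 1 := Real.rpow_lt_one ht0.le ht.2 hc0
    have hinv : t ^ (-c) = (t ^ c)⁻¹ := Real.rpow_neg ht0.le _
    have hu0 : 0 < t ^ (-c) - 1 := by
      have : 1 < t ^ (-c) := by rw [hinv]; exact (one_lt_inv₀ hv0).2 hv1
      linarith
    have hub : t ^ (-c) - 1 < p / N₀ := by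
      have h1 : t ^ (-c) < a ^ (-c) :=
        Real.rpow_lt_rpow_of_neg ha0 ht.1 (neg_lt_zero.2 hc0)
      have h2 : a ^ (-c) = b := by
        rw [hadef, ← Real.rpow_mul hb0.le]
        have : -(θ / Real.log 2) * -c = 1 := by
          rw [hcdef]; field_simp
        rw [this, Real.rpow_one]
      rw [h2] at h1
      rw [hbdef] at h1
      linarith
    have hmb := htail _ hu0 hub
    rw [hset t ht0]
    calc (P {ω | S ω ≤ t ^ (-c) - 1}).toReal
        ≤ Real.exp (K - s * (p / (t ^ (-c) - 1) - N₀)) := hmb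
      _ = Real.exp (K + s * N₀) * Real.exp (-(s * (p / (t ^ (-c) - 1)))) := by
          rw [← Real.exp_add]; ring_nf
      _ ≤ Real.exp (K + s * N₀) * Real.exp (-(s * p * t ^ c)) := by
          apply mul_le_mul_of_nonneg_left _ (Real.exp_pos _).le
          apply Real.exp_le_exp.2
          have huv : (t ^ (-c) - 1) * t ^ c = 1 - t ^ c := by
            rw [hinv, sub_mul, inv_mul_cancel₀ (ne_of_gt hv0), one_mul]
          have hkey : p * t ^ c ≤ p / (t ^ (-c) - 1) := by
            rw [le_div_iff₀ hu0]
            have e3 : p * t ^ c * (t ^ (-c) - 1) = p * (1 - t ^ c) := by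
              rw [mul_assoc, mul_comm (t ^ c) _, ← mul_assoc, mul_assoc, huv]
            have h3 : 0 ≤ p * t ^ c := mul_nonneg hp.le hv0.le
            nlinarith [e3, h3]
          nlinarith [mul_le_mul_of_nonneg_left hkey hs.le]
  -- Fubini setup
  set ν : Measure ℝ := volume.restrict (Set.Ioc a 1) with hνdef
  haveI hνfin : IsFiniteMeasure ν := by
    constructor
    rw [hνdef, Measure.restrict_apply_univ, Real.volume_Ioc]
    exact ENNReal.ofReal_lt_top
  set f : Ω → ℝ → ℝ := fun ω t => Set.indicator (Set.Iic (X ω)) (fun _ => (1:ℝ)) t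
    with hfdef
  have hsmeas : MeasurableSet {q : Ω × ℝ | q.2 ≤ X q.1} :=
    measurableSet_le measurable_snd (hXmeas.comp measurable_fst)
  have hfeq : Function.uncurry f = Set.indicator {q : Ω × ℝ | q.2 ≤ X q.1}
      (fun _ => (1:ℝ)) := by
    ext q
    simp [Function.uncurry, hfdef, Set.indicator_apply]
  have hint : Integrable (Function.uncurry f) (P.prod ν) := by
    rw [hfeq]; exact (integrable_const 1).indicator hsmeas
  have hswap := integral_integral_swap hint
  have hleft : ∀ ω, ∫ t, f ω t ∂ν = max (X ω - a) 0 := by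
    intro ω
    simp only [hfdef]
    rw [integral_indicator measurableSet_Iic, hνdef,
      Measure.restrict_restrict measurableSet_Iic, integral_const, smul_eq_mul, mul_one,
      Set.inter_comm, Set.Ioc_inter_Iic, measureReal_def, Measure.restrict_apply_univ, Real.volume_Ioc,
      ENNReal.toReal_ofReal']
    rw [min_eq_right (hX1 ω)]
  have hright : ∀ t, ∫ ω, f ω t ∂P = (P {ω | t ≤ X ω}).toReal := by
    intro t
    have e : (fun ω => f ω t) = Set.indicator {ω | t ≤ X ω} (fun _ => (1:ℝ)) := by
      ext ω; simp [hfdef, Set.indicator_apply]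
    rw [e, integral_indicator_const (1:ℝ) (measurableSet_le measurable_const hXmeas),
      smul_eq_mul, mul_one, measureReal_def]
  -- integrabilities
  have hXint : Integrable X P := by
    apply Integrable.mono' (integrable_const (1:ℝ)) hXmeas.aestronglyMeasurable
    filter_upwards with ω
    rw [Real.norm_eq_abs, abs_of_pos (hX0 ω)]
    exact hX1 ω
  have hMint : Integrable (fun ω => max (X ω - a) 0) P :=
    (hXint.sub (integrable_const a)).pos_part
  have hGint : Integrable (fun t => (P {ω | t ≤ X ω}).toReal) ν := by
    have hanti : Antitone (fun t : ℝ => (P {ω | t ≤ X ω}).toReal) := by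
      intro t1 t2 h12
      apply ENNReal.toReal_mono (measure_ne_top P _)
      exact measure_mono (fun ω hω => le_trans h12 hω)
    apply Integrable.mono' (integrable_const (1:ℝ)) hanti.measurable.aestronglyMeasurable
    filter_upwards with t
    rw [Real.norm_eq_abs, abs_of_nonneg ENNReal.toReal_nonneg]
    calc (P {ω | t ≤ X ω}).toReal ≤ (P Set.univ).toReal :=
          ENNReal.toReal_mono (measure_ne_top P _) (measure_mono (Set.subset_univ _))
      _ = 1 := by simp
  have hBint : Integrable (fun t => Real.exp (K + s * N₀) *
      Real.exp (-(s * p * t ^ c))) ν := by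
    have hcont : ContinuousOn (fun t : ℝ => Real.exp (K + s * N₀) *
        Real.exp (-(s * p * t ^ c))) (Set.Icc a 1) := by
      apply ContinuousOn.mul continuousOn_const
      apply Real.continuous_exp.comp_continuousOn
      apply ContinuousOn.neg
      apply ContinuousOn.mul continuousOn_const
      apply ContinuousOn.rpow_const continuousOn_id
      intro x hx
      exact Or.inl (ne_of_gt (lt_of_lt_of_le ha0 hx.1))
    rw [hνdef]
    exact (hcont.integrableOn_Icc).mono_set Set.Ioc_subset_Icc_self
  -- the a.e. comparison on ν
  have hone : ∀ᵐ t ∂ν, t ≠ (1:ℝ) := by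
    rw [ae_iff]
    have e : {t : ℝ | ¬ t ≠ 1} = {(1:ℝ)} := by ext x; simp
    rw [e, hνdef, Measure.restrict_apply (measurableSet_singleton 1)]
    exact measure_mono_null Set.inter_subset_left Real.volume_singleton
  have hmem : ∀ᵐ t ∂ν, t ∈ Set.Ioc a 1 := by
    rw [hνdef]; exact ae_restrict_mem measurableSet_Ioc
  have hae : ∀ᵐ t ∂ν, (P {ω | t ≤ X ω}).toReal ≤
      Real.exp (K + s * N₀) * Real.exp (-(s * p * t ^ c)) := by
    filter_upwards [hmem, hone] with t ht hne
    exact htail2 t ⟨ht.1, lt_of_le_of_ne ht.2 hne⟩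
  -- final chain
  calc ∫ ω, X ω ∂P
      ≤ ∫ ω, (a + max (X ω - a) 0) ∂P := by
        apply integral_mono hXint ((integrable_const a).add hMint)
        intro ω
        simp only [Pi.add_apply]
        rcases le_total (X ω) a with h | h
        · rw [max_eq_right (by linarith : X ω - a ≤ 0)]; simpa using h
        · rw [max_eq_left (by linarith : (0:ℝ) ≤ X ω - a)]; simp
    _ = a + ∫ ω, max (X ω - a) 0 ∂P := by
        rw [integral_add (integrable_const a) hMint, integral_const]; simp
    _ = a + ∫ t, (P {ω | t ≤ X ω}).toReal ∂ν := by
        congr 1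
        rw [show (∫ ω, max (X ω - a) 0 ∂P) = ∫ ω, ∫ t, f ω t ∂ν ∂P from
          integral_congr_ae (Filter.Eventually.of_forall fun ω => (hleft ω).symm), hswap]
        exact integral_congr_ae (Filter.Eventually.of_forall fun t => hright t)
    _ ≤ a + ∫ t, Real.exp (K + s * N₀) * Real.exp (-(s * p * t ^ c)) ∂ν := by
        exact (add_le_add_iff_left a).2 (integral_mono_ae hGint hBint hae)
    _ = a + Real.exp (K + s * N₀) * ∫ t in a..1, Real.exp (-(s * p * t ^ c)) := by
        rw [intervalIntegral.integral_of_le ha1.le, integral_const_mul, hνdef]
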